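/- Let n ≥ 1, let T ∈ ℝ^{n×n} be the tridiagonal Toeplitz matrix with 2 on the diagonal and −1 on the first sub- and superdiagonals, and let U ∈ ℝ^{n×2} have columns √2·e₁ and √2·e_n. Then the 2×2 matrix I₂ + Uᵗ T⁻² U is invertible with determinant det(I₂ + Uᵗ T⁻² U) = (n² + 2n + 3)/3. -/
import Mathlib


open scoped ENNReal
open Matrix

/-- The `n × n` tridiagonal Toeplitz matrix `tridiag(-1, 2, -1)`. -/
def Tmat (n : ℕ) : Matrix (Fin n) (Fin n) ℝ :=
  Matrix.of fun i j =>
    if (i : ℕ) = (j : ℕ) then 2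
    else if (j : ℕ) = (i : ℕ) + 1 ∨ (i : ℕ) = (j : ℕ) + 1 then -1
    else 0

/-- The `n × 2` matrix whose columns are `√2·e₁` and `√2·eₙ`. -/
noncomputable def Umat (n : ℕ) : Matrix (Fin n) (Fin 2) ℝ :=
  Matrix.of fun i k =>
    if k = 0 then (if (i : ℕ) = 0 then Real.sqrt 2 else 0)
    else (if (i : ℕ) = n - 1 then Real.sqrt 2 else 0)

/-- Explicit inverse of `Tmat n`. -/
noncomputable def Smat (n : ℕ) : Matrix (Fin n) (Fin n) ℝ :=
  Matrix.of fun i j =>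
    (((min (i:ℕ) (j:ℕ) : ℕ) : ℝ) + 1) * ((n:ℝ) - ((max (i:ℕ) (j:ℕ) : ℕ) : ℝ)) / ((n:ℝ) + 1)

lemma TS (n : ℕ) : Tmat n * Smat n = 1 := by
  have hn1 : ((n:ℝ) + 1) ≠ 0 := by positivity
  ext i j
  have hai : (i:ℕ) < n := i.isLt
  have hbj : (j:ℕ) < n := j.isLt
  set a := (i : ℕ) with ha
  set b := (j : ℕ) with hb
  set s : ℕ → ℝ := fun k => (((min k b : ℕ) : ℝ) + 1) * ((n:ℝ) - ((max k b : ℕ) : ℝ)) / ((n:ℝ) + 1) with hs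
  set F : ℕ → ℝ := fun k => (if a = k then (2:ℝ) else if k = a + 1 ∨ a = k + 1 then -1 else 0) * s k with hF
  have hFk : ∀ k : Fin n, Tmat n i k * Smat n k j = F (k : ℕ) := fun k => rfl
  clear_value F s a b
  have hsn : s n = 0 := by
    rw [hs]
    simp only []
    rw [max_eq_left (le_of_lt hbj), sub_self, mul_zero, zero_div]
  have hsplit : ∀ k, F k = (if k = a then 2 * s a else 0) + (if k = a+1 then -(s (a+1)) else 0)
      + (if k + 1 = a then -(s k) else 0) := by
    intro k
    simp only [hF]
    by_cases h1 : a = k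
    · subst h1
      rw [if_pos rfl, if_pos rfl, if_neg (by omega), if_neg (by omega)]
      ring
    · rw [if_neg h1, if_neg (Ne.symm h1)]
      by_cases h2 : k = a + 1
      · rw [if_pos (Or.inl h2), if_pos h2, if_neg (by omega)]
        subst h2; ring
      · rw [if_neg h2]
        by_cases h3 : a = k + 1
        · rw [if_pos (Or.inr h3), if_pos h3.symm]
          ring
        · rw [if_neg (by tauto), if_neg (fun h => h3 h.symm)]
          ring
  rw [Matrix.mul_apply]
  have H1 : (∑ k ∈ Finset.range n, if k = a then 2 * s a else 0) = 2 * s a := by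
    rw [Finset.sum_ite_eq' (Finset.range n) a (fun _ => 2 * s a), if_pos (Finset.mem_range.mpr hai)]
  have H2 : (∑ k ∈ Finset.range n, if k = a+1 then -(s (a+1)) else 0) = -(s (a+1)) := by
    rw [Finset.sum_ite_eq' (Finset.range n) (a+1) (fun _ => -(s (a+1)))]
    by_cases h : a + 1 < n
    · rw [if_pos (Finset.mem_range.mpr h)]
    · rw [if_neg (by simp [Finset.mem_range]; omega)]
      have : a + 1 = n := by omega
      rw [this, hsn]; ring
  have H3 : (∑ k ∈ Finset.range n, if k + 1 = a then -(s k) else 0)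
      = (if a = 0 then 0 else -(s (a-1))) := by
    by_cases h0 : a = 0
    · rw [if_pos h0]
      apply Finset.sum_eq_zero
      intro k _; rw [if_neg (by omega)]
    · rw [if_neg h0]
      have : ∀ k ∈ Finset.range n, (if k + 1 = a then -(s k) else 0) = (if k = a - 1 then -(s k) else 0) := by
        intro k _
        by_cases h : k + 1 = a
        · rw [if_pos h, if_pos (by omega)]
        · rw [if_neg h, if_neg (by omega)]
      rw [Finset.sum_congr rfl this, Finset.sum_ite_eq' (Finset.range n) (a-1) (fun k => -(s k)),
        if_pos (Finset.mem_range.mpr (by omega))]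
  calc ∑ k : Fin n, Tmat n i k * Smat n k j
      = ∑ k : Fin n, F (k:ℕ) := Finset.sum_congr rfl (fun k _ => hFk k)
    _ = ∑ k ∈ Finset.range n, F k := Fin.sum_univ_eq_sum_range F n
    _ = 2 * s a + (-(s (a+1))) + (if a = 0 then 0 else -(s (a-1))) := by
        simp only [hsplit]
        rw [Finset.sum_add_distrib, Finset.sum_add_distrib, H1, H2, H3]
    _ = (1 : Matrix (Fin n) (Fin n) ℝ) i j := by
        rw [Matrix.one_apply]
        rcases lt_trichotomy a b with hab | hab | hab
        · -- a < b
          have hij : ¬ i = j := by rw [Fin.ext_iff]; omega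
          rw [if_neg hij]
          simp only [hs]
          rw [min_eq_left (by omega : a ≤ b), max_eq_right (by omega : a ≤ b),
            min_eq_left (by omega : a + 1 ≤ b), max_eq_right (by omega : a + 1 ≤ b)]
          by_cases h0 : a = 0
          · rw [if_pos h0]; subst h0; push_cast; field_simp; ring
          · rw [if_neg h0,
              min_eq_left (by omega : a - 1 ≤ b), max_eq_right (by omega : a - 1 ≤ b)]
            have hc : ((a - 1 : ℕ) : ℝ) = (a:ℝ) - 1 := by
              rw [Nat.cast_sub (by omega)]; norm_num
            push_cast [hc]
            field_simp
            ring
        · -- a = b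
          have hij : i = j := by rw [Fin.ext_iff]; omega
          rw [if_pos hij]
          subst hab
          simp only [hs]
          rw [min_self, max_self, min_eq_right (by omega : a ≤ a + 1),
            max_eq_left (by omega : a ≤ a + 1)]
          by_cases h0 : a = 0
          · rw [if_pos h0]; subst h0; push_cast; field_simp; ring
          · rw [if_neg h0, min_eq_left (by omega : a - 1 ≤ a), max_eq_right (by omega : a - 1 ≤ a)]
            have hc : ((a - 1 : ℕ) : ℝ) = (a:ℝ) - 1 := by
              rw [Nat.cast_sub (by omega)]; norm_num
            push_cast [hc]
            field_simp
            ring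
        · -- a > b
          have hij : ¬ i = j := by rw [Fin.ext_iff]; omega
          rw [if_neg hij]
          simp only [hs]
          have h0 : ¬ a = 0 := by omega
          rw [min_eq_right (by omega : b ≤ a), max_eq_left (by omega : b ≤ a),
            min_eq_right (by omega : b ≤ a + 1), max_eq_left (by omega : b ≤ a + 1),
            if_neg h0,
            min_eq_right (by omega : b ≤ a - 1), max_eq_left (by omega : b ≤ a - 1)]
          have hc : ((a - 1 : ℕ) : ℝ) = (a:ℝ) - 1 := by
            rw [Nat.cast_sub (by omega)]; norm_num
          push_cast [hc]
          field_simp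
          ring

lemma sum_id' (n : ℕ) : ∑ k ∈ Finset.range n, (k:ℝ) = n * (n-1) / 2 := by
  induction n with
  | zero => simp
  | succ m ih => rw [Finset.sum_range_succ, ih]; push_cast; ring

lemma sum_sq' (n : ℕ) : ∑ k ∈ Finset.range n, (k:ℝ)^2 = n * (n-1) * (2*n-1) / 6 := by
  induction n with
  | zero => simp
  | succ m ih => rw [Finset.sum_range_succ, ih]; push_cast; ring

lemma sumA (n : ℕ) : ∑ k ∈ Finset.range n, ((n:ℝ) - k)^2 = n * (n+1) * (2*n+1) / 6 := by
  have e : ∀ k ∈ Finset.range n, ((n:ℝ) - k)^2 = ((n:ℝ)^2) * 1 - (2*n) * (k:ℝ) + (k:ℝ)^2 := by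
    intros; ring
  rw [Finset.sum_congr rfl e, Finset.sum_add_distrib, Finset.sum_sub_distrib,
    ← Finset.mul_sum, ← Finset.mul_sum, sum_id', sum_sq', Finset.sum_const, Finset.card_range,
    nsmul_eq_mul, mul_one]
  ring

lemma sumB (n : ℕ) : ∑ k ∈ Finset.range n, ((k:ℝ) + 1)^2 = (n * (n+1) * (2*n+1) / 6 : ℝ) := by
  have e : ∀ k ∈ Finset.range n, ((k:ℝ) + 1)^2 = (k:ℝ)^2 + ((2:ℝ) * k + 1) := by intros; ring
  rw [Finset.sum_congr rfl e, Finset.sum_add_distrib, Finset.sum_add_distrib,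
    ← Finset.mul_sum, sum_id', sum_sq', Finset.sum_const, Finset.card_range, nsmul_eq_mul, mul_one]
  ring

lemma sumC (n : ℕ) : ∑ k ∈ Finset.range n, ((n:ℝ) - k) * ((k:ℝ) + 1) = n * (n+1) * (n+2) / 6 := by
  have e : ∀ k ∈ Finset.range n, ((n:ℝ) - k) * ((k:ℝ) + 1)
      = ((n:ℝ) * 1 + ((n:ℝ) - 1) * (k:ℝ)) - (k:ℝ)^2 := by intros; ring
  rw [Finset.sum_congr rfl e, Finset.sum_sub_distrib, Finset.sum_add_distrib,
    ← Finset.mul_sum, ← Finset.mul_sum, sum_id', sum_sq', Finset.sum_const, Finset.card_range,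
    nsmul_eq_mul, mul_one]
  ring

/-- The `2 × 2` matrix `I₂ + Uᵗ T⁻² U` is invertible, with determinant
`(n² + 2n + 3)/3`. -/
theorem det_I2_add_Ut_Tinv_sq_U (n : ℕ) (hn : 1 ≤ n) :
    IsUnit (1 + (Umat n)ᵀ * ((Tmat n)⁻¹ * (Tmat n)⁻¹) * Umat n) ∧
    (1 + (Umat n)ᵀ * ((Tmat n)⁻¹ * (Tmat n)⁻¹) * Umat n).det =
      ((n : ℝ) ^ 2 + 2 * n + 3) / 3 := by
  have hn1 : ((n:ℝ) + 1) ≠ 0 := by positivity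
  have hinv : (Tmat n)⁻¹ = Smat n := Matrix.inv_eq_right_inv (TS n)
  rw [hinv]
  set i0 : Fin n := ⟨0, hn⟩ with hi0
  set i1 : Fin n := ⟨n - 1, by omega⟩ with hi1
  have hrow0 : ∀ p : Fin n, Smat n i0 p = ((n:ℝ) - (p:ℕ)) / ((n:ℝ) + 1) := by
    intro p
    show (((min (i0:ℕ) (p:ℕ) : ℕ) : ℝ) + 1) * ((n:ℝ) - ((max (i0:ℕ) (p:ℕ) : ℕ) : ℝ)) / ((n:ℝ) + 1) = _
    have h0 : (i0 : ℕ) = 0 := rfl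
    rw [h0, Nat.zero_min, Nat.zero_max]
    push_cast; ring
  have hrow1 : ∀ p : Fin n, Smat n i1 p = ((p:ℕ) + 1 : ℝ) / ((n:ℝ) + 1) := by
    intro p
    show (((min (i1:ℕ) (p:ℕ) : ℕ) : ℝ) + 1) * ((n:ℝ) - ((max (i1:ℕ) (p:ℕ) : ℕ) : ℝ)) / ((n:ℝ) + 1) = _
    have h1 : (i1 : ℕ) = n - 1 := rfl
    have hp : (p:ℕ) < n := p.isLt
    rw [h1, min_eq_right (by omega), max_eq_left (by omega), Nat.cast_sub hn]
    push_cast; ring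
  have hsymm : ∀ p q : Fin n, Smat n p q = Smat n q p := by
    intro p q; simp [Smat, min_comm, max_comm]
  set A := Smat n * Smat n with hA
  -- entries of A
  have hA00 : A i0 i0 = (n:ℝ) * (2*n+1) / (6*(n+1)) := by
    rw [hA, Matrix.mul_apply]
    have h : ∀ k : Fin n, Smat n i0 k * Smat n k i0
        = (fun m : ℕ => (((n:ℝ) - m) / ((n:ℝ)+1))^2) (k:ℕ) := by
      intro k; rw [hsymm k i0, hrow0 k]; exact (pow_two _).symm
    rw [Finset.sum_congr rfl (fun k _ => h k),
      Fin.sum_univ_eq_sum_range (fun m : ℕ => (((n:ℝ) - m) / ((n:ℝ)+1))^2) n]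
    simp only [div_pow]
    rw [← Finset.sum_div, sumA, div_eq_div_iff (by positivity) (by positivity)]
    ring
  have hA11 : A i1 i1 = (n:ℝ) * (2*n+1) / (6*(n+1)) := by
    rw [hA, Matrix.mul_apply]
    have h : ∀ k : Fin n, Smat n i1 k * Smat n k i1
        = (fun m : ℕ => (((m:ℝ) + 1) / ((n:ℝ)+1))^2) (k:ℕ) := by
      intro k; rw [hsymm k i1, hrow1 k]; exact (pow_two _).symm
    rw [Finset.sum_congr rfl (fun k _ => h k),
      Fin.sum_univ_eq_sum_range (fun m : ℕ => (((m:ℝ) + 1) / ((n:ℝ)+1))^2) n]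
    simp only [div_pow]
    rw [← Finset.sum_div, sumB, div_eq_div_iff (by positivity) (by positivity)]
    ring
  have hA01 : A i0 i1 = (n:ℝ) * (n+2) / (6*(n+1)) := by
    rw [hA, Matrix.mul_apply]
    have h : ∀ k : Fin n, Smat n i0 k * Smat n k i1
        = (fun m : ℕ => (((n:ℝ) - m) * ((m:ℝ) + 1)) / (((n:ℝ)+1) * ((n:ℝ)+1))) (k:ℕ) := by
      intro k; rw [hsymm k i1, hrow1 k, hrow0 k]; exact div_mul_div_comm _ _ _ _
    rw [Finset.sum_congr rfl (fun k _ => h k),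
      Fin.sum_univ_eq_sum_range (fun m : ℕ => (((n:ℝ) - m) * ((m:ℝ) + 1)) / (((n:ℝ)+1) * ((n:ℝ)+1))) n]
    rw [← Finset.sum_div, sumC, div_eq_div_iff (by positivity) (by positivity)]
    ring
  have hA10 : A i1 i0 = (n:ℝ) * (n+2) / (6*(n+1)) := by
    have hAsymm : A i1 i0 = A i0 i1 := by
      rw [hA, Matrix.mul_apply, Matrix.mul_apply]
      apply Finset.sum_congr rfl
      intro k _
      rw [hsymm i1 k, hsymm k i0, mul_comm]
    rw [hAsymm, hA01]
  have hUcol0 : ∀ p : Fin n, Umat n p 0 = (if (p:ℕ) = 0 then Real.sqrt 2 else 0) :=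
    fun p => by simp [Umat]
  have hUcol1 : ∀ p : Fin n, Umat n p 1 = (if (p:ℕ) = n - 1 then Real.sqrt 2 else 0) :=
    fun p => by simp [Umat]
  have hv0 : ∀ f : Fin n → ℝ,
      (∑ p : Fin n, (if (p:ℕ) = 0 then Real.sqrt 2 else 0) * f p) = Real.sqrt 2 * f i0 := by
    intro f
    rw [Finset.sum_eq_single_of_mem i0 (Finset.mem_univ _)]
    · rw [if_pos rfl]
    · intro p _ hp
      rw [if_neg (fun h => hp (Fin.val_injective h)), zero_mul]
  have hv1 : ∀ f : Fin n → ℝ,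
      (∑ p : Fin n, (if (p:ℕ) = n - 1 then Real.sqrt 2 else 0) * f p) = Real.sqrt 2 * f i1 := by
    intro f
    rw [Finset.sum_eq_single_of_mem i1 (Finset.mem_univ _)]
    · rw [if_pos rfl]
    · intro p _ hp
      rw [if_neg (fun h => hp (Fin.val_injective h)), zero_mul]
  have hw0 : ∀ f : Fin n → ℝ,
      (∑ q : Fin n, f q * (if (q:ℕ) = 0 then Real.sqrt 2 else 0)) = f i0 * Real.sqrt 2 := by
    intro f
    rw [Finset.sum_eq_single_of_mem i0 (Finset.mem_univ _)]
    · rw [if_pos rfl]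
    · intro p _ hp
      rw [if_neg (fun h => hp (Fin.val_injective h)), mul_zero]
  have hw1 : ∀ f : Fin n → ℝ,
      (∑ q : Fin n, f q * (if (q:ℕ) = n - 1 then Real.sqrt 2 else 0)) = f i1 * Real.sqrt 2 := by
    intro f
    rw [Finset.sum_eq_single_of_mem i1 (Finset.mem_univ _)]
    · rw [if_pos rfl]
    · intro p _ hp
      rw [if_neg (fun h => hp (Fin.val_injective h)), mul_zero]
  have h2 : Real.sqrt 2 * Real.sqrt 2 = 2 := Real.mul_self_sqrt (by norm_num)
  have hUA0 : ∀ q : Fin n, ((Umat n)ᵀ * A) 0 q = Real.sqrt 2 * A i0 q := by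
    intro q
    rw [Matrix.mul_apply]
    calc (∑ p : Fin n, (Umat n)ᵀ 0 p * A p q)
        = ∑ p : Fin n, (if (p:ℕ) = 0 then Real.sqrt 2 else 0) * A p q :=
          Finset.sum_congr rfl (fun p _ => by rw [Matrix.transpose_apply, hUcol0])
      _ = Real.sqrt 2 * A i0 q := hv0 _
  have hUA1 : ∀ q : Fin n, ((Umat n)ᵀ * A) 1 q = Real.sqrt 2 * A i1 q := by
    intro q
    rw [Matrix.mul_apply]
    calc (∑ p : Fin n, (Umat n)ᵀ 1 p * A p q)
        = ∑ p : Fin n, (if (p:ℕ) = n - 1 then Real.sqrt 2 else 0) * A p q :=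
          Finset.sum_congr rfl (fun p _ => by rw [Matrix.transpose_apply, hUcol1])
      _ = Real.sqrt 2 * A i1 q := hv1 _
  have sqmul : ∀ x : ℝ, (Real.sqrt 2 * x) * Real.sqrt 2 = 2 * x := by
    intro x; rw [mul_comm, ← mul_assoc, h2]
  have hE00 : ((Umat n)ᵀ * A * Umat n) 0 0 = 2 * A i0 i0 := by
    rw [Matrix.mul_apply]
    calc (∑ q : Fin n, ((Umat n)ᵀ * A) 0 q * Umat n q 0)
        = ∑ q : Fin n, (fun q => Real.sqrt 2 * A i0 q) q * (if (q:ℕ) = 0 then Real.sqrt 2 else 0) :=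
          Finset.sum_congr rfl (fun q _ => by rw [hUA0, hUcol0])
      _ = (Real.sqrt 2 * A i0 i0) * Real.sqrt 2 := hw0 _
      _ = 2 * A i0 i0 := sqmul _
  have hE01 : ((Umat n)ᵀ * A * Umat n) 0 1 = 2 * A i0 i1 := by
    rw [Matrix.mul_apply]
    calc (∑ q : Fin n, ((Umat n)ᵀ * A) 0 q * Umat n q 1)
        = ∑ q : Fin n, (fun q => Real.sqrt 2 * A i0 q) q * (if (q:ℕ) = n - 1 then Real.sqrt 2 else 0) :=
          Finset.sum_congr rfl (fun q _ => by rw [hUA0, hUcol1])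
      _ = (Real.sqrt 2 * A i0 i1) * Real.sqrt 2 := hw1 _
      _ = 2 * A i0 i1 := sqmul _
  have hE10 : ((Umat n)ᵀ * A * Umat n) 1 0 = 2 * A i1 i0 := by
    rw [Matrix.mul_apply]
    calc (∑ q : Fin n, ((Umat n)ᵀ * A) 1 q * Umat n q 0)
        = ∑ q : Fin n, (fun q => Real.sqrt 2 * A i1 q) q * (if (q:ℕ) = 0 then Real.sqrt 2 else 0) :=
          Finset.sum_congr rfl (fun q _ => by rw [hUA1, hUcol0])
      _ = (Real.sqrt 2 * A i1 i0) * Real.sqrt 2 := hw0 _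
      _ = 2 * A i1 i0 := sqmul _
  have hE11 : ((Umat n)ᵀ * A * Umat n) 1 1 = 2 * A i1 i1 := by
    rw [Matrix.mul_apply]
    calc (∑ q : Fin n, ((Umat n)ᵀ * A) 1 q * Umat n q 1)
        = ∑ q : Fin n, (fun q => Real.sqrt 2 * A i1 q) q * (if (q:ℕ) = n - 1 then Real.sqrt 2 else 0) :=
          Finset.sum_congr rfl (fun q _ => by rw [hUA1, hUcol1])
      _ = (Real.sqrt 2 * A i1 i1) * Real.sqrt 2 := hw1 _
      _ = 2 * A i1 i1 := sqmul _
  set M := 1 + (Umat n)ᵀ * A * Umat n with hM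
  have e00 : M 0 0 = 1 + 2 * A i0 i0 := by
    rw [hM, Matrix.add_apply, Matrix.one_apply_eq, hE00]
  have e01 : M 0 1 = 2 * A i0 i1 := by
    rw [hM, Matrix.add_apply, Matrix.one_apply_ne (by decide : (0 : Fin 2) ≠ 1), hE01, zero_add]
  have e10 : M 1 0 = 2 * A i1 i0 := by
    rw [hM, Matrix.add_apply, Matrix.one_apply_ne (by decide : (1 : Fin 2) ≠ 0), hE10, zero_add]
  have e11 : M 1 1 = 1 + 2 * A i1 i1 := by
    rw [hM, Matrix.add_apply, Matrix.one_apply_eq, hE11]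
  have hdet : M.det = ((n:ℝ)^2 + 2*n + 3)/3 := by
    rw [Matrix.det_fin_two, e00, e01, e10, e11, hA00, hA11, hA01, hA10]
    field_simp
    ring
  refine ⟨?_, hdet⟩
  rw [Matrix.isUnit_iff_isUnit_det, hdet, isUnit_iff_ne_zero]
  positivity
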